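/- Let Ĥ ∈ ℂ^{M×N}, let Ξ ∈ ℂ^{M×M} be Hermitian positive definite, and let P ∈ ℂ^{N×N} be Hermitian positive semidefinite. For any V ∈ ℂ^{M×N} with D = V^H Ĥ P^{1/2} and Σ = V^H Ξ V − 0 (noise-plus-interference covariance conditioned on the combiner), the function f(V) = log₂ det(I_N + D^H (V^H Ξ V)^{-1} D) is maximized over all V with V^H Ξ V invertible by V = Ξ^{-1} Ĥ, achieving f = log₂ det(I_N + P^{1/2} Ĥ^H Ξ^{-1} Ĥ P^{1/2}). -/

import Mathlib

open Matrix ComplexOrder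

/-- The positive semidefinite square root of a positive semidefinite matrix
(removed from Mathlib; restored with its former definition). -/
noncomputable def Matrix.PosSemidef.sqrt {n : Type*} [Fintype n] [DecidableEq n]
    {𝕜 : Type*} [RCLike 𝕜] {A : Matrix n n 𝕜} (hA : A.PosSemidef) : Matrix n n 𝕜 :=
  (hA.1.eigenvectorUnitary : Matrix n n 𝕜) * diagonal ((↑) ∘ (√·) ∘ hA.1.eigenvalues) *
    (star hA.1.eigenvectorUnitary : Matrix n n 𝕜)

lemma Matrix.PosSemidef.posSemidef_sqrt {n : Type*} [Fintype n] [DecidableEq n]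
    {𝕜 : Type*} [RCLike 𝕜] {A : Matrix n n 𝕜} (hA : A.PosSemidef) : hA.sqrt.PosSemidef := by
  unfold Matrix.PosSemidef.sqrt
  have hd : (diagonal ((↑) ∘ (√·) ∘ hA.1.eigenvalues : n → 𝕜)).PosSemidef :=
    PosSemidef.diagonal (fun i => by simp [Real.sqrt_nonneg])
  have := hd.mul_mul_conjTranspose_same (hA.1.eigenvectorUnitary : Matrix n n 𝕜)
  rwa [← star_eq_conjTranspose] at this

lemma Matrix.PosSemidef.sqrt_mul_self {n : Type*} [Fintype n] [DecidableEq n]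
    {𝕜 : Type*} [RCLike 𝕜] {A : Matrix n n 𝕜} (hA : A.PosSemidef) : hA.sqrt * hA.sqrt = A := by
  unfold Matrix.PosSemidef.sqrt
  have hDD : diagonal ((↑) ∘ (√·) ∘ hA.1.eigenvalues : n → 𝕜) *
      diagonal ((↑) ∘ (√·) ∘ hA.1.eigenvalues : n → 𝕜) =
      diagonal (RCLike.ofReal ∘ hA.1.eigenvalues) := by
    rw [diagonal_mul_diagonal]
    congr 1
    funext i
    simp only [Function.comp_apply]
    rw [← RCLike.ofReal_mul, Real.mul_self_sqrt (hA.eigenvalues_nonneg i)]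
  conv_rhs => rw [hA.1.spectral_theorem, Unitary.conjStarAlgAut_apply]
  rw [← hDD]
  simp only [Matrix.mul_assoc]
  rw [← Matrix.mul_assoc (star (hA.1.eigenvectorUnitary : Matrix n n 𝕜)) _,
    Unitary.coe_star_mul_self, Matrix.one_mul]

section Aux

variable {m n : Type*} [Fintype m] [Fintype n] [DecidableEq m] [DecidableEq n]

lemma aux_posDef_of_posSemidef_isUnit {A : Matrix n n ℂ} (hA : A.PosSemidef) (hU : IsUnit A) :
    A.PosDef := by
  refine posDef_iff_dotProduct_mulVec.mpr ⟨hA.1, fun x hx => ?_⟩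
  rcases lt_or_eq_of_le (hA.dotProduct_mulVec_nonneg x) with h | h
  · exact h
  · exfalso
    apply hx
    have h0 : A *ᵥ x = 0 := (hA.dotProduct_mulVec_zero_iff x).mp h.symm
    have hinj : Function.Injective (A.mulVec) := mulVec_injective_iff_isUnit.mpr hU
    simpa using hinj (h0.trans (A.mulVec_zero).symm)

lemma aux_one_sub_proj_posSemidef (X : Matrix m n ℂ) (hW : IsUnit (Xᴴ * X)) :
    (1 - X * (Xᴴ * X)⁻¹ * Xᴴ).PosSemidef := by
  set Q := X * (Xᴴ * X)⁻¹ * Xᴴ with hQdef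
  have hWH : ((Xᴴ * X)⁻¹)ᴴ = (Xᴴ * X)⁻¹ :=
    (posSemidef_conjTranspose_mul_self X).isHermitian.inv
  have hdet := (isUnit_iff_isUnit_det _).1 hW
  have hWinv : (Xᴴ * X)⁻¹ * (Xᴴ * X) = 1 := nonsing_inv_mul _ hdet
  have hQH : Qᴴ = Q := by
    simp only [hQdef, conjTranspose_mul, hWH, conjTranspose_conjTranspose, Matrix.mul_assoc]
  have hQ2 : Q * Q = Q := by
    calc Q * Q = X * ((Xᴴ * X)⁻¹ * (Xᴴ * X) * (Xᴴ * X)⁻¹) * Xᴴ := by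
          simp only [hQdef, Matrix.mul_assoc]
    _ = Q := by rw [hWinv, one_mul, hQdef]
  have hmul : (1 - Q) * (1 - Q) = 1 - Q := by
    simp [Matrix.mul_sub, Matrix.sub_mul, hQ2]
  have key : (1 - Q)ᴴ * (1 - Q) = 1 - Q := by
    rw [conjTranspose_sub, conjTranspose_one, hQH, hmul]
  exact key ▸ posSemidef_conjTranspose_mul_self (1 - Q)

lemma aux_one_le_det_re_one_add {C : Matrix n n ℂ} (hC : C.PosSemidef) :
    1 ≤ (1 + C).det.re ∧ (1 + C).det.im = 0 := by
  have h1C : (1 + C).PosDef := Matrix.PosDef.one.add_posSemidef hC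
  have hH := h1C.isHermitian
  have heig : ∀ i, 1 ≤ hH.eigenvalues i := by
    intro i
    rw [hH.eigenvalues_eq]
    have h2 : star ⇑(hH.eigenvectorBasis i) ⬝ᵥ (1 + C) *ᵥ ⇑(hH.eigenvectorBasis i)
        = star ⇑(hH.eigenvectorBasis i) ⬝ᵥ ⇑(hH.eigenvectorBasis i)
          + star ⇑(hH.eigenvectorBasis i) ⬝ᵥ C *ᵥ ⇑(hH.eigenvectorBasis i) := by
      rw [add_mulVec, one_mulVec, dotProduct_add]
    rw [h2, map_add]
    have h3 : RCLike.re (star ⇑(hH.eigenvectorBasis i) ⬝ᵥ ⇑(hH.eigenvectorBasis i)) = 1 := by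
      rw [dotProduct_comm]
      simp only [← EuclideanSpace.inner_eq_star_dotProduct, inner_self_eq_norm_sq_to_K,
        hH.eigenvectorBasis.orthonormal.1 i]
      norm_num
    have h4 := hC.re_dotProduct_nonneg ⇑(hH.eigenvectorBasis i)
    rw [h3]
    linarith
  have hdet : (1 + C).det = ((∏ i, hH.eigenvalues i : ℝ) : ℂ) := by
    rw [hH.det_eq_prod_eigenvalues]
    norm_cast
  rw [hdet]
  have hprod : (1:ℝ) ≤ ∏ i, hH.eigenvalues i := by
    calc (1:ℝ) = ∏ _i : n, (1:ℝ) := by simp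
    _ ≤ ∏ i, hH.eigenvalues i := Finset.prod_le_prod (by simp) (fun i _ => heig i)
  exact ⟨by simp only [Complex.ofReal_re]; exact hprod, by simp only [Complex.ofReal_im]⟩

lemma aux_det_re_mono {A B : Matrix n n ℂ} (hA : A.PosSemidef) (hBA : (B - A).PosSemidef) :
    (1 + A).det.re ≤ (1 + B).det.re := by
  have h1A : (1 + A).PosDef := Matrix.PosDef.one.add_posSemidef hA
  obtain ⟨R, hRps, hRR⟩ : ∃ R : Matrix n n ℂ, R.PosSemidef ∧ R * R = 1 + A :=
    ⟨h1A.posSemidef.sqrt, h1A.posSemidef.posSemidef_sqrt, h1A.posSemidef.sqrt_mul_self⟩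
  have hRunit : IsUnit R := by
    have hu := (isUnit_iff_isUnit_det _).1 h1A.isUnit
    rw [← hRR, det_mul] at hu
    exact (isUnit_iff_isUnit_det _).2 (IsUnit.mul_iff.1 hu).1
  have hRpd : R.PosDef := aux_posDef_of_posSemidef_isUnit hRps hRunit
  have hdet := (isUnit_iff_isUnit_det _).1 hRunit
  have hiR : R⁻¹ * R = 1 := nonsing_inv_mul R hdet
  have hRi : R * R⁻¹ = 1 := mul_nonsing_inv R hdet
  have hRH : Rᴴ = R := hRps.isHermitian
  have hRiH : (R⁻¹)ᴴ = R⁻¹ := by rw [conjTranspose_nonsing_inv, hRH]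
  have hCps : (R⁻¹ * (B - A) * R⁻¹).PosSemidef := by
    have := hBA.mul_mul_conjTranspose_same R⁻¹
    rwa [hRiH] at this
  have hfact : 1 + B = R * (1 + R⁻¹ * (B - A) * R⁻¹) * R := by
    have hmid : R * (R⁻¹ * (B - A) * R⁻¹) * R = B - A := by
      simp only [← Matrix.mul_assoc]
      rw [hRi, one_mul, Matrix.mul_assoc, hiR, mul_one]
    calc 1 + B = (1 + A) + (B - A) := by abel
    _ = R * R + R * (R⁻¹ * (B - A) * R⁻¹) * R := by rw [hRR, hmid]
    _ = R * (1 + R⁻¹ * (B - A) * R⁻¹) * R := by rw [mul_add, add_mul, mul_one]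
  have hdetfact : (1 + B).det = R.det * (1 + R⁻¹ * (B - A) * R⁻¹).det * R.det := by
    rw [hfact, det_mul, det_mul]
  have hdetA : (1 + A).det = R.det * R.det := by rw [← hRR, det_mul]
  have h0R : 0 < R.det := hRpd.det_pos
  have hRre : 0 < R.det.re ∧ R.det.im = 0 := by
    rw [Complex.lt_def] at h0R
    exact ⟨by simpa using h0R.1, by simpa using h0R.2.symm⟩
  obtain ⟨hCre, hCim⟩ := aux_one_le_det_re_one_add hCps
  rw [hdetfact, hdetA]
  rw [Complex.mul_re, Complex.mul_re, Complex.mul_re, Complex.mul_im, hRre.2, hCim]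
  ring_nf
  nlinarith [hRre.1, hCre]

end Aux

set_option maxHeartbeats 1000000 in
/-- Optimality of MMSE combining (deterministic form): over all combiners `V` with
`Vᴴ Ξ V` invertible, `log₂ det(I + P^{1/2} Ĥᴴ V (Vᴴ Ξ V)⁻¹ Vᴴ Ĥ P^{1/2})` is
maximized by `V = Ξ⁻¹ Ĥ`, achieving `log₂ det(I + P^{1/2} Ĥᴴ Ξ⁻¹ Ĥ P^{1/2})`. -/
theorem stmt12 (M N : ℕ) (Hh : Matrix (Fin M) (Fin N) ℂ)
    (Xi : Matrix (Fin M) (Fin M) ℂ) (hXi : Xi.PosDef)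
    (P : Matrix (Fin N) (Fin N) ℂ) (hP : P.PosSemidef)
    (hfull : IsUnit (Hhᴴ * Xi⁻¹ * Hh)) :
    (∀ V : Matrix (Fin M) (Fin N) ℂ, IsUnit (Vᴴ * Xi * V) →
      Real.logb 2
        ((1 + hP.sqrt * Hhᴴ * V * (Vᴴ * Xi * V)⁻¹ * Vᴴ * Hh * hP.sqrt).det.re) ≤
      Real.logb 2
        ((1 + hP.sqrt * Hhᴴ * Xi⁻¹ * Hh * hP.sqrt).det.re)) ∧
    Real.logb 2
      ((1 + hP.sqrt * Hhᴴ * (Xi⁻¹ * Hh) *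
          (((Xi⁻¹ * Hh)ᴴ * Xi * (Xi⁻¹ * Hh))⁻¹) * (Xi⁻¹ * Hh)ᴴ * Hh * hP.sqrt).det.re) =
    Real.logb 2 ((1 + hP.sqrt * Hhᴴ * Xi⁻¹ * Hh * hP.sqrt).det.re) := by
  have hS : hP.sqrt.IsHermitian := hP.posSemidef_sqrt.isHermitian
  -- square root of Xi
  obtain ⟨R, hRps, hRR⟩ : ∃ R : Matrix (Fin M) (Fin M) ℂ, R.PosSemidef ∧ R * R = Xi :=
    ⟨hXi.posSemidef.sqrt, hXi.posSemidef.posSemidef_sqrt, hXi.posSemidef.sqrt_mul_self⟩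
  have hRunit : IsUnit R := by
    have hu := (isUnit_iff_isUnit_det _).1 hXi.isUnit
    rw [← hRR, det_mul] at hu
    exact (isUnit_iff_isUnit_det _).2 (IsUnit.mul_iff.1 hu).1
  have hRdet := (isUnit_iff_isUnit_det _).1 hRunit
  have hiR : R⁻¹ * R = 1 := nonsing_inv_mul R hRdet
  have hRi : R * R⁻¹ = 1 := mul_nonsing_inv R hRdet
  have hRH : Rᴴ = R := hRps.isHermitian
  have hXiinv : Xi⁻¹ = R⁻¹ * R⁻¹ := by rw [← hRR, Matrix.mul_inv_rev]
  have hcancel1 : ∀ Z : Matrix (Fin M) (Fin N) ℂ, R⁻¹ * (R * Z) = Z := fun Z => by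
    rw [← Matrix.mul_assoc, hiR, Matrix.one_mul]
  have hcancel2 : ∀ Z : Matrix (Fin M) (Fin N) ℂ, R * (R⁻¹ * Z) = Z := fun Z => by
    rw [← Matrix.mul_assoc, hRi, Matrix.one_mul]
  constructor
  · intro V hV
    obtain ⟨T, hTdef⟩ : ∃ T : Matrix (Fin N) (Fin M) ℂ, T = hP.sqrt * Hhᴴ * R⁻¹ := ⟨_, rfl⟩
    obtain ⟨X, hXdef⟩ : ∃ X : Matrix (Fin M) (Fin N) ℂ, X = R * V := ⟨_, rfl⟩
    have hXH : Xᴴ = Vᴴ * R := by rw [hXdef, conjTranspose_mul, hRH]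
    have hXX : Xᴴ * X = Vᴴ * Xi * V := by
      rw [hXH, hXdef, ← hRR]
      simp only [Matrix.mul_assoc]
    have hTH : Tᴴ = R⁻¹ * Hh * hP.sqrt := by
      rw [hTdef, conjTranspose_mul, conjTranspose_mul, conjTranspose_conjTranspose,
        conjTranspose_nonsing_inv, hRH, hS.eq, Matrix.mul_assoc]
    have hproj : (1 - X * (Xᴴ * X)⁻¹ * Xᴴ).PosSemidef :=
      aux_one_sub_proj_posSemidef X (hXX ▸ hV)
    have hTT : T * Tᴴ = hP.sqrt * Hhᴴ * Xi⁻¹ * Hh * hP.sqrt := by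
      rw [hTH, hTdef, hXiinv]
      simp only [Matrix.mul_assoc]
    have hTQ : T * (X * (Xᴴ * X)⁻¹ * Xᴴ) * Tᴴ
        = hP.sqrt * Hhᴴ * V * (Vᴴ * Xi * V)⁻¹ * Vᴴ * Hh * hP.sqrt := by
      rw [hXX, hTH, hTdef, hXH, hXdef]
      simp only [Matrix.mul_assoc, hcancel1, hcancel2]
    have hsub : (hP.sqrt * Hhᴴ * Xi⁻¹ * Hh * hP.sqrt
        - hP.sqrt * Hhᴴ * V * (Vᴴ * Xi * V)⁻¹ * Vᴴ * Hh * hP.sqrt).PosSemidef := by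
      have h := hproj.mul_mul_conjTranspose_same T
      have hexp : T * (1 - X * (Xᴴ * X)⁻¹ * Xᴴ) * Tᴴ
          = T * Tᴴ - T * (X * (Xᴴ * X)⁻¹ * Xᴴ) * Tᴴ := by
        rw [Matrix.mul_sub, Matrix.mul_one, Matrix.sub_mul]
      rw [hexp, hTT, hTQ] at h
      exact h
    have hQps : (X * (Xᴴ * X)⁻¹ * Xᴴ).PosSemidef := by
      have hWps : (Vᴴ * Xi * V).PosSemidef := hXi.posSemidef.conjTranspose_mul_mul_same V
      have hinv : ((Xᴴ * X)⁻¹).PosSemidef := by rw [hXX]; exact hWps.inv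
      exact hinv.mul_mul_conjTranspose_same X
    have hAVps : (hP.sqrt * Hhᴴ * V * (Vᴴ * Xi * V)⁻¹ * Vᴴ * Hh * hP.sqrt).PosSemidef := by
      have := hQps.mul_mul_conjTranspose_same T
      rwa [hTQ] at this
    have hle := aux_det_re_mono hAVps hsub
    have hpos : (0:ℝ) < (1 + hP.sqrt * Hhᴴ * V * (Vᴴ * Xi * V)⁻¹ * Vᴴ * Hh * hP.sqrt).det.re := by
      have h1 := aux_one_le_det_re_one_add hAVps
      linarith [h1.1]
    exact Real.logb_le_logb_of_le (by norm_num) hpos hle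
  · -- equality part
    have hGdet := (isUnit_iff_isUnit_det _).1 hfull
    have hXiH : (Xi⁻¹)ᴴ = Xi⁻¹ := by rw [conjTranspose_nonsing_inv, hXi.isHermitian.eq]
    have hXidet := (isUnit_iff_isUnit_det _).1 hXi.isUnit
    have hXicancel : ∀ Z : Matrix (Fin M) (Fin N) ℂ, Xi * (Xi⁻¹ * Z) = Z := fun Z => by
      rw [← Matrix.mul_assoc, mul_nonsing_inv Xi hXidet, Matrix.one_mul]
    have hV0H : (Xi⁻¹ * Hh)ᴴ = Hhᴴ * Xi⁻¹ := by rw [conjTranspose_mul, hXiH]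
    have hW0 : (Xi⁻¹ * Hh)ᴴ * Xi * (Xi⁻¹ * Hh) = Hhᴴ * Xi⁻¹ * Hh := by
      rw [hV0H]
      simp only [Matrix.mul_assoc, hXicancel]
    have hGG : Hhᴴ * Xi⁻¹ * Hh * (Hhᴴ * Xi⁻¹ * Hh)⁻¹ = 1 :=
      mul_nonsing_inv _ hGdet
    have hEq : hP.sqrt * Hhᴴ * (Xi⁻¹ * Hh) *
          (((Xi⁻¹ * Hh)ᴴ * Xi * (Xi⁻¹ * Hh))⁻¹) * (Xi⁻¹ * Hh)ᴴ * Hh * hP.sqrt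
        = hP.sqrt * Hhᴴ * Xi⁻¹ * Hh * hP.sqrt := by
      rw [hW0, hV0H]
      calc hP.sqrt * Hhᴴ * (Xi⁻¹ * Hh) * (Hhᴴ * Xi⁻¹ * Hh)⁻¹ * (Hhᴴ * Xi⁻¹) * Hh * hP.sqrt
          = hP.sqrt * ((Hhᴴ * Xi⁻¹ * Hh) * (Hhᴴ * Xi⁻¹ * Hh)⁻¹ * (Hhᴴ * Xi⁻¹ * Hh)) * hP.sqrt := by
            simp only [Matrix.mul_assoc]
      _ = hP.sqrt * Hhᴴ * Xi⁻¹ * Hh * hP.sqrt := by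
            rw [hGG, one_mul]
            simp only [Matrix.mul_assoc]
    rw [hEq]
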